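/- Let α_1 ≤ α_2 ≤ … ≤ α_q be integers ≥ 1, let m_c ≥ 1, and define ζ_i = m_c·α_i for i ≤ m_c and ζ_i = m_c·α_i + (m_c − 1) for i > m_c. If the windows-scheduling instance (m_c, {α_i}) admits a feasible schedule, then the pinwheel instance {ζ_1,…,ζ_q} admits a feasible pinwheel schedule. Equivalently, if {ζ_i} admits no feasible pinwheel schedule, then (m_c, {α_i}) admits no feasible windows schedule. -/

import Mathlib

open Finset in
lemma exists_rearrange {q mc : ℕ} (g : Fin mc → Fin q) :
    ∃ f : Fin mc → Fin q,
      (∀ i : Fin q, (∃ k, g k = i) → ∀ h : (i : ℕ) < mc, f ⟨i, h⟩ = i) ∧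
      (∀ k, ∃ k', f k' = g k) := by
  classical
  set Spec : Fin mc → Prop := fun k => ∃ i : Fin q, (i : ℕ) = (k : ℕ) ∧ ∃ k', g k' = i
    with hSpecDef
  -- witness position for a special channel
  set w : Fin mc → Fin mc := fun k =>
    if h : Spec k then Classical.choose (Classical.choose_spec h).2 else k with hwDef
  have hw : ∀ k, ∀ h : Spec k, g (w k) = Classical.choose h ∧
      ((Classical.choose h : Fin q) : ℕ) = (k : ℕ) := by
    intro k h
    have h1 := (Classical.choose_spec h).1
    have h2 := Classical.choose_spec (Classical.choose_spec h).2
    refine ⟨?_, h1⟩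
    simp only [hwDef, dif_pos h]
    exact h2
  have hcard : (univ.filter fun p : Fin mc => ¬ ((g p : ℕ) < mc)).card
      ≤ (univ.filter fun k => ¬ Spec k).card := by
    have h1 : (univ.filter Spec).card ≤ (univ.filter fun p : Fin mc => (g p : ℕ) < mc).card := by
      apply Finset.card_le_card_of_injOn w
      · intro k hk
        rw [Finset.mem_coe, Finset.mem_filter] at hk ⊢
        obtain ⟨hsp⟩ := hk.2
        have h := hk.2
        obtain ⟨hgw, hval⟩ := hw k h
        refine ⟨Finset.mem_univ _, ?_⟩
        rw [hgw, hval]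
        exact k.isLt
      · intro k1 hk1 k2 hk2 heq
        rw [Finset.mem_coe, Finset.mem_filter] at hk1 hk2
        obtain ⟨hg1, hv1⟩ := hw k1 hk1.2
        obtain ⟨hg2, hv2⟩ := hw k2 hk2.2
        have : Classical.choose hk1.2 = Classical.choose hk2.2 := by
          rw [← hg1, ← hg2, heq]
        apply Fin.val_injective
        rw [← hv1, ← hv2, this]
    have h2 := Finset.card_filter_add_card_filter_not (s := (univ : Finset (Fin mc)))
      (p := Spec)
    have h3 := Finset.card_filter_add_card_filter_not (s := (univ : Finset (Fin mc)))
      (p := fun p : Fin mc => (g p : ℕ) < mc)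
    omega
  obtain ⟨NS', hNSsub, hNScard⟩ := Finset.exists_subset_card_eq hcard
  have e := Finset.equivOfCardEq (s := univ.filter fun p : Fin mc => ¬ ((g p : ℕ) < mc))
    (t := NS') hNScard.symm
  refine ⟨fun k => if h1 : Spec k then Classical.choose h1
    else if h2 : k ∈ NS' then g ((e.symm ⟨k, h2⟩ : _))
    else g k, ?_, ?_⟩
  · intro i hi h
    have hs : Spec ⟨(i : ℕ), h⟩ := ⟨i, rfl, hi⟩
    simp only [dif_pos hs]
    apply Fin.val_injective
    exact (Classical.choose_spec hs).1
  · intro k0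
    by_cases hlt : ((g k0 : Fin q) : ℕ) < mc
    · refine ⟨⟨(g k0 : Fin q), hlt⟩, ?_⟩
      have hs : Spec ⟨((g k0 : Fin q) : ℕ), hlt⟩ := ⟨g k0, rfl, k0, rfl⟩
      simp only [dif_pos hs]
      apply Fin.val_injective
      exact (Classical.choose_spec hs).1
    · have hmem : k0 ∈ univ.filter fun p : Fin mc => ¬ ((g p : ℕ) < mc) := by
        simp only [Finset.mem_filter, Finset.mem_univ, true_and]
        exact hlt
      set x : {y // y ∈ univ.filter fun p : Fin mc => ¬ ((g p : ℕ) < mc)} := ⟨k0, hmem⟩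
      refine ⟨(e x : Fin mc), ?_⟩
      have hns : ¬ Spec (e x : Fin mc) := by
        have h2 : (e x : Fin mc) ∈ NS' := (e x).2
        have := hNSsub h2
        rw [Finset.mem_filter] at this
        exact this.2
      have h2 : (e x : Fin mc) ∈ NS' := (e x).2
      simp only [dif_neg hns, dif_pos h2]
      have : (⟨(e x : Fin mc), h2⟩ : {y // y ∈ NS'}) = e x := rfl
      rw [this, Equiv.symm_apply_apply]


lemma interleave_eval {q mc : ℕ} (F : ℕ → Fin mc → Fin q) (t' : ℕ) (k : Fin mc)
    (h : (mc * t' + (k : ℕ)) % mc < mc) :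
    F ((mc * t' + (k : ℕ)) / mc) ⟨(mc * t' + (k : ℕ)) % mc, h⟩ = F t' k := by
  have hmc : 0 < mc := k.pos
  have h1 : (mc * t' + (k : ℕ)) / mc = t' := by
    rw [Nat.mul_add_div hmc, Nat.div_eq_of_lt k.isLt, add_zero]
  have h2 : (⟨(mc * t' + (k : ℕ)) % mc, h⟩ : Fin mc) = k := by
    apply Fin.val_injective
    show (mc * t' + (k : ℕ)) % mc = (k : ℕ)
    rw [Nat.mul_add_mod]
    exact Nat.mod_eq_of_lt k.isLt
  rw [h1, h2]



/-- A windows schedule `W` over `m` channels is feasible for the window sizes `α`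
if every symbol `i` occurs in one of the tuples in every window of `α i`
consecutive time slots. -/
def WSPFeasible {q m : ℕ} (α : Fin q → ℕ) (W : ℕ → Fin m → Fin q) : Prop :=
  ∀ i : Fin q, ∀ t : ℕ, ∃ t' k, t ≤ t' ∧ t' < t + α i ∧ W t' k = i

/-- With `α_1 ≤ … ≤ α_q` and `ζ_i = m_c·α_i` for the first `m_c` symbols,
`ζ_i = m_c·α_i + (m_c − 1)` for the remaining ones: if the windows-scheduling
instance `(m_c, {α_i})` admits a feasible schedule, then the pinwheel instance
`{ζ_i}` admits a feasible pinwheel schedule. -/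
theorem stmt_12 {q mc : ℕ} (α : Fin q → ℕ) (hα : ∀ i, 1 ≤ α i) (hmc : 1 ≤ mc)
    (hmono : Monotone α)
    (ζ : Fin q → ℕ)
    (hζ : ∀ i : Fin q,
      ζ i = if (i : ℕ) < mc then mc * α i else mc * α i + (mc - 1))
    (hW : ∃ W : ℕ → Fin mc → Fin q, WSPFeasible α W) :
    ∃ c : ℕ → Fin q, ∀ i : Fin q, ∀ t : ℕ, ∃ t', t ≤ t' ∧ t' < t + ζ i ∧ c t' = i := by
  classical
  obtain ⟨W, hWf⟩ := hW
  have hR := fun t => exists_rearrange (W t)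
  choose F hA hB using hR
  refine ⟨fun n => F (n / mc) ⟨n % mc, Nat.mod_lt n (by omega)⟩, ?_⟩
  intro i t
  have htd : mc * (t / mc) + t % mc = t := Nat.div_add_mod t mc
  have hrlt : t % mc < mc := Nat.mod_lt t (by omega)
  set s0 := t / mc with hs0
  set r := t % mc with hr
  by_cases hi : (i : ℕ) < mc
  · have hζi : ζ i = mc * α i := by rw [hζ]; simp [hi]
    by_cases hri : r ≤ (i : ℕ)
    · obtain ⟨t', k, h1, h2, h3⟩ := hWf i s0
      refine ⟨mc * t' + (i : ℕ), ?_, ?_, ?_⟩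
      · have := Nat.mul_le_mul_left mc h1
        omega
      · have h2' : mc * (t' + 1) ≤ mc * (s0 + α i) := Nat.mul_le_mul_left mc h2
        rw [Nat.mul_add, Nat.mul_add, Nat.mul_one] at h2'
        omega
      · show F _ (⟨(mc * t' + ((⟨(i:ℕ), hi⟩ : Fin mc) : ℕ)) % mc, _⟩) = i
        exact (interleave_eval F t' ⟨(i : ℕ), hi⟩ _).trans (hA t' i ⟨k, h3⟩ hi)
    · obtain ⟨t', k, h1, h2, h3⟩ := hWf i (s0 + 1)
      refine ⟨mc * t' + (i : ℕ), ?_, ?_, ?_⟩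
      · have := Nat.mul_le_mul_left mc h1
        rw [Nat.mul_add, Nat.mul_one] at this
        omega
      · have h2' : mc * (t' + 1) ≤ mc * (s0 + 1 + α i) := Nat.mul_le_mul_left mc h2
        rw [Nat.mul_add, Nat.mul_add, Nat.mul_add, Nat.mul_one] at h2'
        omega
      · exact (interleave_eval F t' ⟨(i : ℕ), hi⟩ _).trans (hA t' i ⟨k, h3⟩ hi)
  · have hζi : ζ i = mc * α i + (mc - 1) := by rw [hζ]; simp [hi]
    have hs' : ∃ s', t ≤ mc * s' ∧ mc * s' ≤ t + mc - 1 := by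
      rcases Nat.eq_zero_or_pos r with h0 | h0
      · exact ⟨s0, by omega, by omega⟩
      · exact ⟨s0 + 1, by rw [Nat.mul_add, Nat.mul_one]; omega,
          by rw [Nat.mul_add, Nat.mul_one]; omega⟩
    obtain ⟨s', hsl, hsu⟩ := hs'
    obtain ⟨t', k, h1, h2, h3⟩ := hWf i s'
    obtain ⟨k', hk'⟩ := hB t' k
    refine ⟨mc * t' + (k' : ℕ), ?_, ?_, ?_⟩
    · have := Nat.mul_le_mul_left mc h1
      omega
    · have h2' : mc * (t' + 1) ≤ mc * (s' + α i) := Nat.mul_le_mul_left mc h2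
      rw [Nat.mul_add, Nat.mul_add, Nat.mul_one] at h2'
      have := k'.isLt
      omega
    · exact (interleave_eval F t' k' _).trans (hk'.trans h3)
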